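/- Let U be a vector space and let (U,·) and (U*,·) be left symmetric algebras. Extend the products to Φ(U) = U ⊕ U* by (X+α)·(Y+β) = X·Y − L_α^t Y − L_X^t β + α·β. Define ρ(X,α) = [L_X, L_α^t] + L_{L_α^t X} + (L_{L_X^t α})^t ∈ End(U). Then the extended product on Φ(U) is left symmetric if and only if ρ(X,α) = 0 for all X ∈ U and α ∈ U*. -/
import Mathlib


variable {k U : Type*} [Field k] [AddCommGroup U] [Module k U] [FiniteDimensional k U]

/-- The transpose `U → U` of an endomorphism of the dual space, using the canonical
identification `U ≅ U**`. -/
noncomputable def dualTranspose (f : Module.Dual k U →ₗ[k] Module.Dual k U) : U →ₗ[k] U :=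
  (Module.evalEquiv k U).symm.toLinearMap ∘ₗ f.dualMap ∘ₗ (Module.evalEquiv k U).toLinearMap

@[simp] lemma apply_dualTranspose (f : Module.Dual k U →ₗ[k] Module.Dual k U)
    (φ : Module.Dual k U) (y : U) : φ (dualTranspose f y) = f φ y := by
  simp [dualTranspose, Module.apply_evalEquiv_symm_apply]

/-- The extended product `(X+α)·(Y+β) = X·Y − L_α^t Y − L_X^t β + α·β` on `Φ(U)`. -/
noncomputable def extProd (mul : U →ₗ[k] U →ₗ[k] U)
    (mulD : Module.Dual k U →ₗ[k] Module.Dual k U →ₗ[k] Module.Dual k U)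
    (p q : U × Module.Dual k U) : U × Module.Dual k U :=
  (mul p.1 q.1 - dualTranspose (mulD p.2) q.1,
   - (mul p.1).dualMap q.2 + mulD p.2 q.2)

/-- `ρ(X,α) = [L_X, L_α^t] + L_{L_α^t X} + (L_{L_X^t α})^t`. -/
noncomputable def rhoOp (mul : U →ₗ[k] U →ₗ[k] U)
    (mulD : Module.Dual k U →ₗ[k] Module.Dual k U →ₗ[k] Module.Dual k U)
    (X : U) (α : Module.Dual k U) : U →ₗ[k] U :=
  mul X ∘ₗ dualTranspose (mulD α) - dualTranspose (mulD α) ∘ₗ mul X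
    + mul (dualTranspose (mulD α) X)
    + dualTranspose (mulD ((mul X).dualMap α))

/-- Given left symmetric products on `U` and `U*`, the extended product on `Φ(U)` is
left symmetric if and only if `ρ(X,α) = 0` for all `X ∈ U`, `α ∈ U*`. -/
theorem extProd_leftSymmetric_iff_rho_eq_zero
    (mul : U →ₗ[k] U →ₗ[k] U)
    (mulD : Module.Dual k U →ₗ[k] Module.Dual k U →ₗ[k] Module.Dual k U)
    (hls : ∀ u v w : U,
      mul (mul u v) w - mul u (mul v w) = mul (mul v u) w - mul v (mul u w))
    (hlsD : ∀ α β γ : Module.Dual k U,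
      mulD (mulD α β) γ - mulD α (mulD β γ) = mulD (mulD β α) γ - mulD β (mulD α γ)) :
    (∀ p q r : U × Module.Dual k U,
      extProd mul mulD (extProd mul mulD p q) r - extProd mul mulD p (extProd mul mulD q r)
        = extProd mul mulD (extProd mul mulD q p) r -
            extProd mul mulD q (extProd mul mulD p r)) ↔
    (∀ (X : U) (α : Module.Dual k U), rhoOp mul mulD X α = 0) := by
  constructor
  · intro h X α
    ext Z
    show _ = (0 : U)
    rw [← Module.forall_dual_apply_eq_zero_iff k]
    intro φ
    have H := congrArg (fun w => φ w.1) (h (X, 0) (0, α) (Z, 0))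
    simp only [extProd, rhoOp] at H ⊢
    simp at H ⊢
    linear_combination H
  · intro h
    rintro ⟨X, α⟩ ⟨Y, β⟩ ⟨Z, γ⟩
    have h' : ∀ (A : U) (δ : Module.Dual k U) (w : U) (φ : Module.Dual k U),
        φ (mul A (dualTranspose (mulD δ) w)) - mulD δ φ (mul A w)
          + φ (mul (dualTranspose (mulD δ) A) w) + mulD ((mul A).dualMap δ) φ w = 0 := by
      intro A δ w φ
      have := congrArg φ (LinearMap.congr_fun (h A δ) w)
      simpa [rhoOp] using this
    refine Prod.ext ?_ ?_
    · rw [← sub_eq_zero, ← Module.forall_dual_apply_eq_zero_iff k]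
      intro φ
      have H1 := congrArg (fun ψ : Module.Dual k U => ψ Z) (hlsD α β φ)
      have H2 := congrArg φ (hls X Y Z)
      simp only [extProd]
      simp only [Prod.fst_sub, Prod.snd_sub, map_sub, map_add, map_neg, apply_dualTranspose,
        LinearMap.sub_apply, LinearMap.add_apply, LinearMap.neg_apply, LinearMap.dualMap_apply,
        map_zero] at *
      linear_combination -H1 + H2 + h' X β Z φ - h' Y α Z φ
    · refine LinearMap.ext fun w => ?_
      have H1 := congrArg (fun ψ : Module.Dual k U => ψ w) (hlsD α β γ)
      have H2 := congrArg γ (hls X Y w)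
      have B : ∀ (A : U) (δ : Module.Dual k U),
          γ (mul A (dualTranspose (mulD δ) w)) = mulD δ ((mul A).dualMap γ) w := by
        intro A δ
        rw [← LinearMap.dualMap_apply, apply_dualTranspose]
      have BX := B X β
      have BY := B Y α
      simp only [extProd]
      simp only [Prod.fst_sub, Prod.snd_sub, map_sub, map_add, map_neg, apply_dualTranspose,
        LinearMap.sub_apply, LinearMap.add_apply, LinearMap.neg_apply, LinearMap.dualMap_apply,
        map_zero] at *
      linear_combination H1 - H2 - h' X β w γ + h' Y α w γ + BX - BY
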